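/- The quantity Ψ appearing in the variance of the score residual is finite: the function y ↦ φ(z(y)) φ(ζ(y))² / Φ(ζ(y)) is integrable on ℝ. -/

import Mathlib

open MeasureTheory Set

/-- Standard normal density. -/
noncomputable def phi (t : ℝ) : ℝ := Real.exp (-(t ^ 2) / 2) / Real.sqrt (2 * Real.pi)

/-- Standard normal cumulative distribution function. -/
noncomputable def Phi (x : ℝ) : ℝ := ∫ t in Set.Iic x, phi t

lemma sqrt_two_pi_pos : 0 < Real.sqrt (2 * Real.pi) :=
  Real.sqrt_pos.mpr (by positivity)

lemma sqrt_two_pi_ge_one : 1 ≤ Real.sqrt (2 * Real.pi) := by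
  rw [show (1:ℝ) = Real.sqrt 1 by simp]
  exact Real.sqrt_le_sqrt (by nlinarith [Real.pi_gt_three])

lemma phi_pos (t : ℝ) : 0 < phi t :=
  div_pos (Real.exp_pos _) sqrt_two_pi_pos

lemma phi_eq : phi = fun t => Real.exp (-((1:ℝ)/2) * t ^ 2) / Real.sqrt (2 * Real.pi) := by
  funext t
  unfold phi
  congr 1
  ring

lemma phi_continuous : Continuous phi := by
  rw [phi_eq]
  exact (Real.continuous_exp.comp (by continuity)).div_const _

lemma phi_integrable : Integrable phi := by
  rw [phi_eq]
  exact (integrable_exp_neg_mul_sq (by norm_num)).div_const _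

lemma phi_anti (s t : ℝ) (hs : s ≤ t) (ht : t ≤ 0) : phi s ≤ phi t := by
  unfold phi
  rw [div_le_div_iff_of_pos_right sqrt_two_pi_pos]
  apply Real.exp_le_exp.mpr
  nlinarith

lemma Phi_mono : Monotone Phi := by
  intro a b hab
  exact setIntegral_mono_set phi_integrable.integrableOn
    (Filter.Eventually.of_forall fun t => (phi_pos t).le)
    (HasSubset.Subset.eventuallyLE (Iic_subset_Iic.mpr hab))

lemma Phi_ge (t : ℝ) (ht : t ≤ 0) : phi (t - 1) ≤ Phi t := by
  have h1 : ∫ s in Set.Ioc (t - 1) t, phi (t - 1) ≤ ∫ s in Set.Ioc (t - 1) t, phi s := by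
    apply setIntegral_mono_on (integrableOn_const (by simp))
      phi_integrable.integrableOn measurableSet_Ioc
    intro s hs
    exact phi_anti (t - 1) s hs.1.le (hs.2.trans ht)
  have h2 : (∫ s in Set.Ioc (t - 1) t, phi (t - 1)) = phi (t - 1) := by
    simp [Real.volume_Ioc]
  have h3 : ∫ s in Set.Ioc (t - 1) t, phi s ≤ Phi t := by
    apply setIntegral_mono_set phi_integrable.integrableOn
      (Filter.Eventually.of_forall fun s => (phi_pos s).le)
      (HasSubset.Subset.eventuallyLE Ioc_subset_Iic_self)
  calc phi (t - 1) = _ := h2.symm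
    _ ≤ _ := h1
    _ ≤ _ := h3

lemma Phi_pos (t : ℝ) : 0 < Phi t := by
  rcases le_or_gt t 0 with h | h
  · exact (phi_pos _).trans_le (Phi_ge t h)
  · exact ((phi_pos _).trans_le (Phi_ge 0 le_rfl)).trans_le (Phi_mono h.le)

lemma key (t : ℝ) : phi t ^ 2 ≤ Real.exp 1 * Phi t := by
  have hs := sqrt_two_pi_pos
  have hs1 := sqrt_two_pi_ge_one
  have hsq : Real.sqrt (2 * Real.pi) ^ 2 = 2 * Real.pi :=
    Real.sq_sqrt (by positivity)
  rcases le_or_gt t 0 with h | h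
  · have h1 : phi t ^ 2 ≤ Real.exp 1 * phi (t - 1) := by
      unfold phi
      rw [div_pow]
      have he : Real.exp (-(t ^ 2) / 2) ^ 2 ≤ Real.exp 1 * Real.exp (-((t-1) ^ 2) / 2) := by
        rw [← Real.exp_nat_mul, ← Real.exp_add]
        apply Real.exp_le_exp.mpr
        push_cast
        nlinarith [sq_nonneg (t + 1)]
      calc Real.exp (-(t ^ 2) / 2) ^ 2 / Real.sqrt (2 * Real.pi) ^ 2
          ≤ (Real.exp 1 * Real.exp (-((t-1) ^ 2) / 2)) / Real.sqrt (2 * Real.pi) ^ 2 := by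
            gcongr
        _ ≤ (Real.exp 1 * Real.exp (-((t-1) ^ 2) / 2)) / Real.sqrt (2 * Real.pi) := by
            apply div_le_div_of_nonneg_left (by positivity) hs
            nlinarith
        _ = Real.exp 1 * (Real.exp (-((t - 1) ^ 2) / 2) / Real.sqrt (2 * Real.pi)) := by
            ring
    exact h1.trans (by
      have := Phi_ge t h
      nlinarith [Real.exp_pos 1])
  · have h1 : phi t ^ 2 ≤ 1 / (2 * Real.pi) := by
      unfold phi
      rw [div_pow, hsq]
      apply div_le_div_of_nonneg_right _ (by positivity)
      calc Real.exp (-(t ^ 2) / 2) ^ 2 ≤ 1 ^ 2 := by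
            apply pow_le_pow_left₀ (Real.exp_pos _).le
            exact Real.exp_le_one_iff.mpr (by nlinarith)
        _ = 1 := one_pow 2
    have h2 : (1:ℝ) / (2 * Real.pi) ≤ Real.exp 1 * phi (-1) := by
      unfold phi
      have he : (1:ℝ) ≤ Real.exp 1 * Real.exp (-((-1:ℝ) ^ 2) / 2) := by
        rw [← Real.exp_add]
        norm_num
      calc (1:ℝ) / (2 * Real.pi) = 1 / Real.sqrt (2 * Real.pi) ^ 2 := by rw [hsq]
        _ ≤ 1 / Real.sqrt (2 * Real.pi) := by
            apply div_le_div_of_nonneg_left (by norm_num) hs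
            nlinarith
        _ ≤ (Real.exp 1 * Real.exp (-((-1:ℝ) ^ 2) / 2)) / Real.sqrt (2 * Real.pi) := by
            gcongr
        _ = Real.exp 1 * (Real.exp (-((-1:ℝ) ^ 2) / 2) / Real.sqrt (2 * Real.pi)) := by ring
    have h3 : phi (-1) = phi (0 - 1) := by norm_num
    have h4 : Phi 0 ≤ Phi t := Phi_mono h.le
    have h5 := Phi_ge 0 le_rfl
    rw [h3] at h2
    nlinarith [Real.exp_pos 1]

theorem GH_Psi_finite (μ₁ μ₂ σ ρ : ℝ) (hσ : 0 < σ) (hρ₁ : -1 < ρ) (hρ₂ : ρ < 1)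
    (z ζ : ℝ → ℝ)
    (hz : ∀ y, z y = (y - μ₁) / σ)
    (hζ : ∀ y, ζ y = (μ₂ + ρ * z y) / Real.sqrt (1 - ρ ^ 2)) :
    Integrable (fun y : ℝ => phi (z y) * phi (ζ y) ^ 2 / Phi (ζ y)) := by
  have hzm : Measurable z := by
    have : z = fun y => (y - μ₁) / σ := funext hz
    rw [this]; fun_prop
  have hζm : Measurable ζ := by
    have : ζ = fun y => (μ₂ + ρ * z y) / Real.sqrt (1 - ρ ^ 2) := funext hζ
    rw [this]
    exact ((measurable_const.add (measurable_const.mul hzm)).div measurable_const)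
  have hg : Integrable (fun y : ℝ => Real.exp 1 * phi ((y - μ₁) / σ)) := by
    have h1 : Integrable (fun x : ℝ => phi (x / σ)) :=
      phi_integrable.comp_div (ne_of_gt hσ)
    exact (h1.comp_sub_right μ₁).const_mul _
  apply Integrable.mono' hg
  · apply Measurable.aestronglyMeasurable
    exact ((phi_continuous.measurable.comp hzm).mul
      ((phi_continuous.measurable.comp hζm).pow_const 2)).div
      (Phi_mono.measurable.comp hζm)
  · apply Filter.Eventually.of_forall
    intro y
    have hP := Phi_pos (ζ y)
    have hnum : 0 ≤ phi (z y) * phi (ζ y) ^ 2 :=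
      mul_nonneg (phi_pos _).le (sq_nonneg _)
    rw [Real.norm_eq_abs, abs_of_nonneg (div_nonneg hnum hP.le), ← hz y]
    rw [div_le_iff₀ hP]
    have := key (ζ y)
    nlinarith [(phi_pos (z y)).le]
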